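/- Let C be a covering of a finite set U. The lower approximation number is supermodular: for all X, Y ⊆ U, f̲(X) + f̲(Y) ≤ f̲(X ∪ Y) + f̲(X ∩ Y). -/

import Mathlib

theorem stmt_6 {U : Type*} [Fintype U] [DecidableEq U]
    (C : Finset (Finset U))
    (hne : ∀ K ∈ C, K.Nonempty)
    (hcov : C.biUnion id = Finset.univ)
    (X Y : Finset U) :
    (C.filter (fun K => K ⊆ X)).card + (C.filter (fun K => K ⊆ Y)).card ≤
      (C.filter (fun K => K ⊆ X ∪ Y)).card + (C.filter (fun K => K ⊆ X ∩ Y)).card := by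
  have h := Finset.card_union_add_card_inter (C.filter (fun K => K ⊆ X))
    (C.filter (fun K => K ⊆ Y))
  rw [← Finset.filter_and] at h
  calc (C.filter (fun K => K ⊆ X)).card + (C.filter (fun K => K ⊆ Y)).card
      = (C.filter (fun K => K ⊆ X) ∪ C.filter (fun K => K ⊆ Y)).card
        + (C.filter (fun K => K ⊆ X ∧ K ⊆ Y)).card := h.symm
    _ ≤ _ := by
        gcongr
        · apply Finset.union_subset <;>
            · intro K hK
              simp only [Finset.mem_filter] at *
              exact ⟨hK.1, hK.2.trans (by simp [Finset.subset_union_left, Finset.subset_union_right])⟩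
        · intro hK
          exact Finset.subset_inter hK.1 hK.2
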